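/- Let X be a nonempty finite design space, let p and s be natural numbers with 0 < s and s < p, let m : X → Matrix (Fin p) (Fin p) ℝ assign to each design point a symmetric positive semidefinite matrix, and let A : Matrix (Fin p) (Fin s) ℝ have rank s. For a design w (a probability weight function on X) write M(w) = ∑_{x ∈ X} w(x) • m(x). Suppose w* is a design such that M(w*) is positive definite. Then w* maximizes the D_A-criterion w ↦ -log(det(Aᵀ * M(w)⁻¹ * A)) over all designs w with M(w) positive definite if and only if for every x ∈ X one has trace(M(w*)⁻¹ * A * (Aᵀ * M(w*)⁻¹ * A)⁻¹ * Aᵀ * M(w*)⁻¹ * m(x)) ≤ s. -/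

import Mathlib

open Matrix BigOperators

section SqrtCompat

open scoped MatrixOrder

variable {k : Type*} [Fintype k] [DecidableEq k]

noncomputable def Matrix.PosSemidef.sqrt {A : Matrix k k ℝ} (_ : A.PosSemidef) : Matrix k k ℝ :=
  CFC.sqrt A

lemma Matrix.PosSemidef.sqrt_mul_self {A : Matrix k k ℝ} (hA : A.PosSemidef) :
    hA.sqrt * hA.sqrt = A :=
  CFC.sqrt_mul_sqrt_self A hA.nonneg

lemma Matrix.PosSemidef.posSemidef_sqrt {A : Matrix k k ℝ} (hA : A.PosSemidef) :
    hA.sqrt.PosSemidef :=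
  (CFC.sqrt_nonneg A).posSemidef

end SqrtCompat

section Aux

variable {n m : Type*} [Fintype n] [Fintype m] [DecidableEq n] [DecidableEq m]

private lemma DAaux_trace_eq_sum_eig {G : Matrix m m ℝ} (hG : G.IsHermitian) :
    G.trace = ∑ i, hG.eigenvalues i := by
  conv_lhs => rw [hG.spectral_theorem, Unitary.conjStarAlgAut_apply]
  rw [Matrix.trace_mul_cycle]
  rw [Unitary.coe_star_mul_self _, Matrix.one_mul]
  simp [Matrix.trace_diagonal]

private lemma DAaux_det_one_add_psd {H : Matrix m m ℝ} (hH : H.PosSemidef) :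
    1 ≤ (1 + H).det := by
  have hH1 := hH.1
  have h2 : hH1.eigenvectorUnitary.1 * (star hH1.eigenvectorUnitary.1 : Matrix m m ℝ) = 1 :=
    Unitary.coe_mul_star_self _
  have key : 1 + H = hH1.eigenvectorUnitary.1 *
      (1 + diagonal (RCLike.ofReal ∘ hH1.eigenvalues)) * (star hH1.eigenvectorUnitary.1) := by
    rw [Matrix.mul_add, Matrix.add_mul, Matrix.mul_one, h2]
    conv_lhs => rw [hH1.spectral_theorem, Unitary.conjStarAlgAut_apply]
  rw [key, Matrix.det_mul, Matrix.det_mul]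
  have hdet : (hH1.eigenvectorUnitary.1).det *
      (star hH1.eigenvectorUnitary.1 : Matrix m m ℝ).det = 1 := by
    rw [← Matrix.det_mul, h2, Matrix.det_one]
  have h3 : (1 + diagonal (RCLike.ofReal ∘ hH1.eigenvalues) : Matrix m m ℝ) =
      diagonal (fun i => 1 + hH1.eigenvalues i) := by
    rw [← Matrix.diagonal_one, Matrix.diagonal_add]
    congr 1
  rw [mul_right_comm, hdet, one_mul, h3, Matrix.det_diagonal]
  calc (1:ℝ) = ∏ _i : m, (1:ℝ) := by simp
    _ ≤ ∏ i, (1 + hH1.eigenvalues i) :=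
      Finset.prod_le_prod (fun i _ => zero_le_one)
        (fun i _ => le_add_of_nonneg_right (hH.eigenvalues_nonneg i))

private lemma DAaux_sqrt_isUnit_det {D : Matrix m m ℝ} (hD : D.PosDef) :
    IsUnit hD.posSemidef.sqrt.det := by
  have h : hD.posSemidef.sqrt.det * hD.posSemidef.sqrt.det = D.det := by
    rw [← Matrix.det_mul, hD.posSemidef.sqrt_mul_self]
  have := hD.det_pos
  refine isUnit_iff_ne_zero.mpr fun h0 => ?_
  rw [h0, mul_zero] at h
  linarith

private lemma DAaux_sqrt_transpose {D : Matrix m m ℝ} (hD : D.PosDef) :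
    hD.posSemidef.sqrtᵀ = hD.posSemidef.sqrt := by
  have := hD.posSemidef.posSemidef_sqrt.1
  rwa [Matrix.IsHermitian, conjTranspose_eq_transpose_of_trivial] at this

private lemma DAaux_det_mono {D E : Matrix m m ℝ} (hD : D.PosDef) (hED : (E - D).PosSemidef) :
    D.det ≤ E.det := by
  set S := hD.posSemidef.sqrt with hSdef
  have hSS : S * S = D := hD.posSemidef.sqrt_mul_self
  have hSu : IsUnit S.det := DAaux_sqrt_isUnit_det hD
  have hST : Sᵀ = S := DAaux_sqrt_transpose hD
  set H := S⁻¹ * (E - D) * S⁻¹ with hHdef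
  have hHpsd : H.PosSemidef := by
    have := hED.conjTranspose_mul_mul_same S⁻¹
    rwa [conjTranspose_eq_transpose_of_trivial, Matrix.transpose_nonsing_inv, hST] at this
  have hE : E = S * (1 + H) * S := by
    rw [Matrix.mul_add, Matrix.mul_one, Matrix.add_mul, hSS, hHdef]
    have : S * (S⁻¹ * (E - D) * S⁻¹) * S = E - D := by
      rw [← Matrix.mul_assoc, ← Matrix.mul_assoc, Matrix.mul_nonsing_inv _ hSu,
        Matrix.one_mul, Matrix.mul_assoc, Matrix.nonsing_inv_mul _ hSu, Matrix.mul_one]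
    rw [this]; abel
  have : E.det = D.det * (1 + H).det := by
    rw [hE, Matrix.det_mul, Matrix.det_mul, mul_right_comm, ← Matrix.det_mul, hSS]
  rw [this]
  nlinarith [DAaux_det_one_add_psd hHpsd, hD.det_pos]

private lemma DAaux_log_det_le {C D : Matrix m m ℝ} (hC : C.PosDef) (hD : D.PosDef) :
    Real.log C.det ≤ Real.log D.det + (D⁻¹ * C).trace - (Fintype.card m : ℝ) := by
  have hDinv : (D⁻¹).PosDef := hD.inv
  set T := hDinv.posSemidef.sqrt with hTdef
  have hTT : T * T = D⁻¹ := hDinv.posSemidef.sqrt_mul_self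
  have hTu : IsUnit T.det := DAaux_sqrt_isUnit_det hDinv
  have hTT' : Tᵀ = T := DAaux_sqrt_transpose hDinv
  have hTinj : ∀ v : m → ℝ, T *ᵥ v = 0 → v = 0 := by
    intro v hv
    have : T⁻¹ *ᵥ (T *ᵥ v) = v := by
      rw [Matrix.mulVec_mulVec, Matrix.nonsing_inv_mul _ hTu, Matrix.one_mulVec]
    rw [hv, Matrix.mulVec_zero] at this
    exact this.symm
  have hG : (Tᵀ * C * T).PosDef := by
    refine Matrix.PosDef.of_dotProduct_mulVec_pos ?_ ?_
    · have := isHermitian_conjTranspose_mul_mul T hC.1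
      simpa [conjTranspose_eq_transpose_of_trivial] using this
    · intro x hx
      have hAx : T *ᵥ x ≠ 0 := fun h => hx (hTinj x h)
      have := hC.dotProduct_mulVec_pos hAx
      simpa [star_trivial, ← mulVec_mulVec, dotProduct_mulVec, vecMul_transpose] using this
  rw [hTT'] at hG
  set G := T * C * T with hGdef
  have htrace : G.trace = (D⁻¹ * C).trace := by
    rw [hGdef, Matrix.trace_mul_cycle, hTT]
  have hdetG : G.det = D⁻¹.det * C.det := by
    rw [hGdef, Matrix.det_mul, Matrix.det_mul, mul_right_comm, ← Matrix.det_mul, hTT]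
  have heig : Real.log G.det ≤ G.trace - (Fintype.card m : ℝ) := by
    have hpos : ∀ i, 0 < hG.1.eigenvalues i := hG.eigenvalues_pos
    have hprod : G.det = ∏ i, hG.1.eigenvalues i := by
      have := hG.1.det_eq_prod_eigenvalues
      simpa using this
    rw [hprod, Real.log_prod (fun i _ => (hpos i).ne'), DAaux_trace_eq_sum_eig hG.1]
    have hcard : (Fintype.card m : ℝ) = ∑ _i : m, (1:ℝ) := by simp
    rw [hcard, ← Finset.sum_sub_distrib]
    exact Finset.sum_le_sum fun i _ => by
      have := Real.log_le_sub_one_of_pos (hpos i); linarith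
  have hdetDinv : D⁻¹.det = D.det⁻¹ := by
    rw [Matrix.det_nonsing_inv, Ring.inverse_eq_inv']
  have hlogG : Real.log G.det = Real.log C.det - Real.log D.det := by
    rw [hdetG, hdetDinv, Real.log_mul (inv_ne_zero hD.det_pos.ne') hC.det_pos.ne',
      Real.log_inv]
    ring
  rw [hlogG, htrace] at heig
  linarith

private lemma DAaux_posdef_conj {M : Matrix n n ℝ} (hM : M.PosDef)
    {A : Matrix n m ℝ} (hA : ∀ v : m → ℝ, A *ᵥ v = 0 → v = 0) :
    (Aᵀ * M * A).PosDef := by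
  refine Matrix.PosDef.of_dotProduct_mulVec_pos ?_ ?_
  · have := isHermitian_conjTranspose_mul_mul A hM.1
    simpa [conjTranspose_eq_transpose_of_trivial] using this
  · intro x hx
    have hAx : A *ᵥ x ≠ 0 := fun h => hx (hA x h)
    have := hM.dotProduct_mulVec_pos hAx
    simpa [star_trivial, ← mulVec_mulVec, dotProduct_mulVec, vecMul_transpose] using this

private lemma DAaux_inv_symm {M : Matrix n n ℝ} (hM : M.PosDef) : (M⁻¹)ᵀ = M⁻¹ := by
  rw [Matrix.transpose_nonsing_inv]
  congr 1
  have := hM.1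
  rwa [Matrix.IsHermitian, conjTranspose_eq_transpose_of_trivial] at this

/-- The master inequality: `φ(N) ≤ φ(M) + tr(B_M N) - s`. -/
private lemma DAaux_master {A : Matrix n m ℝ} (hAinj : ∀ v : m → ℝ, A *ᵥ v = 0 → v = 0)
    {M N : Matrix n n ℝ} (hM : M.PosDef) (hN : N.PosDef) :
    -Real.log (Aᵀ * N⁻¹ * A).det ≤ -Real.log (Aᵀ * M⁻¹ * A).det
      + (M⁻¹ * A * (Aᵀ * M⁻¹ * A)⁻¹ * Aᵀ * M⁻¹ * N).trace - (Fintype.card m : ℝ) := by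
  have hC : (Aᵀ * M⁻¹ * A).PosDef := DAaux_posdef_conj hM.inv hAinj
  have hCN : (Aᵀ * N⁻¹ * A).PosDef := DAaux_posdef_conj hN.inv hAinj
  set C := Aᵀ * M⁻¹ * A with hCdef
  set CN := Aᵀ * N⁻¹ * A with hCNdef
  have hCu : IsUnit C.det := isUnit_iff_ne_zero.mpr hC.det_pos.ne'
  have hCNu : IsUnit CN.det := isUnit_iff_ne_zero.mpr hCN.det_pos.ne'
  have hNu : IsUnit N.det := isUnit_iff_ne_zero.mpr hN.det_pos.ne'
  have hMi : (M⁻¹)ᵀ = M⁻¹ := DAaux_inv_symm hM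
  have hNi : (N⁻¹)ᵀ = N⁻¹ := DAaux_inv_symm hN
  have hCi : (C⁻¹)ᵀ = C⁻¹ := DAaux_inv_symm hC
  have hCNi : (CN⁻¹)ᵀ = CN⁻¹ := DAaux_inv_symm hCN
  set L := C⁻¹ * Aᵀ * M⁻¹ with hLdef
  have hLA : L * A = 1 := by
    rw [hLdef, Matrix.mul_assoc, Matrix.mul_assoc, ← Matrix.mul_assoc Aᵀ, ← hCdef,
      Matrix.nonsing_inv_mul _ hCu]
  set K := L * N * Lᵀ with hKdef
  set R := L - CN⁻¹ * Aᵀ * N⁻¹ with hRdef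
  have hRt : Rᵀ = Lᵀ - N⁻¹ * A * CN⁻¹ := by
    simp only [hRdef, Matrix.transpose_sub, Matrix.transpose_mul, Matrix.transpose_transpose,
      hNi, hCNi, Matrix.mul_assoc]
  have key : R * N * Rᵀ = K - CN⁻¹ := by
    have e2 : L * N * (N⁻¹ * A * CN⁻¹) = CN⁻¹ := by
      rw [Matrix.mul_assoc L, ← Matrix.mul_assoc N, ← Matrix.mul_assoc N,
        Matrix.mul_nonsing_inv _ hNu, Matrix.one_mul, ← Matrix.mul_assoc, hLA, Matrix.one_mul]
    have e3 : CN⁻¹ * Aᵀ * N⁻¹ * N * Lᵀ = CN⁻¹ := by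
      have hAL : Aᵀ * Lᵀ = 1 := by
        rw [← Matrix.transpose_mul, hLA, Matrix.transpose_one]
      rw [Matrix.mul_assoc _ N⁻¹, Matrix.nonsing_inv_mul _ hNu, Matrix.mul_one,
        Matrix.mul_assoc, hAL, Matrix.mul_one]
    have e4 : CN⁻¹ * Aᵀ * N⁻¹ * N * (N⁻¹ * A * CN⁻¹) = CN⁻¹ := by
      rw [Matrix.mul_assoc _ N⁻¹ N, Matrix.nonsing_inv_mul _ hNu, Matrix.mul_one]
      calc CN⁻¹ * Aᵀ * (N⁻¹ * A * CN⁻¹) = CN⁻¹ * (Aᵀ * N⁻¹ * A) * CN⁻¹ := by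
            simp only [Matrix.mul_assoc]
        _ = CN⁻¹ := by rw [← hCNdef, Matrix.nonsing_inv_mul _ hCNu, Matrix.one_mul]
    rw [hRt, hRdef, Matrix.sub_mul, Matrix.sub_mul, Matrix.mul_sub, Matrix.mul_sub, e2, e3, e4,
      ← hKdef]
    abel
  have hKC : (K - CN⁻¹).PosSemidef := by
    have := hN.posSemidef.mul_mul_conjTranspose_same R
    rwa [conjTranspose_eq_transpose_of_trivial, key] at this
  have hCNinv : (CN⁻¹).PosDef := hCN.inv
  have hKpd : K.PosDef := by
    have := hCNinv.add_posSemidef hKC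
    rwa [add_sub_cancel] at this
  have hdetle : CN⁻¹.det ≤ K.det := DAaux_det_mono hCNinv hKC
  have hld := DAaux_log_det_le hKpd hC.inv
  rw [Matrix.nonsing_inv_nonsing_inv _ hCu] at hld
  have hCL : C * L = Aᵀ * M⁻¹ := by
    rw [hLdef, ← Matrix.mul_assoc, ← Matrix.mul_assoc, Matrix.mul_nonsing_inv _ hCu,
      Matrix.one_mul]
  have hLt : Lᵀ = M⁻¹ * A * C⁻¹ := by
    rw [hLdef, Matrix.transpose_mul, Matrix.transpose_mul, hMi, hCi, Matrix.transpose_transpose,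
      Matrix.mul_assoc]
  have htr : (C * K).trace = (M⁻¹ * A * C⁻¹ * Aᵀ * M⁻¹ * N).trace := by
    calc (C * K).trace = ((C * L * N) * Lᵀ).trace := by
          rw [hKdef]; simp only [Matrix.mul_assoc]
      _ = (Lᵀ * (C * L * N)).trace := Matrix.trace_mul_comm _ _
      _ = (M⁻¹ * A * C⁻¹ * Aᵀ * M⁻¹ * N).trace := by
          rw [hLt, hCL]; simp only [Matrix.mul_assoc]
  have hlogCN : Real.log CN⁻¹.det = -Real.log CN.det := by
    rw [Matrix.det_nonsing_inv, Ring.inverse_eq_inv', Real.log_inv]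
  have hlogC : Real.log C⁻¹.det = -Real.log C.det := by
    rw [Matrix.det_nonsing_inv, Ring.inverse_eq_inv', Real.log_inv]
  have h1 : Real.log CN⁻¹.det ≤ Real.log K.det :=
    Real.log_le_log hCNinv.det_pos hdetle
  rw [hlogCN] at h1
  rw [hlogC, htr] at hld
  linarith

/-- `tr(B_M M) = s`. -/
private lemma DAaux_trace_self {A : Matrix n m ℝ} (hAinj : ∀ v : m → ℝ, A *ᵥ v = 0 → v = 0)
    {M : Matrix n n ℝ} (hM : M.PosDef) :
    (M⁻¹ * A * (Aᵀ * M⁻¹ * A)⁻¹ * Aᵀ * M⁻¹ * M).trace = (Fintype.card m : ℝ) := by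
  have hC : (Aᵀ * M⁻¹ * A).PosDef := DAaux_posdef_conj hM.inv hAinj
  have hCu : IsUnit (Aᵀ * M⁻¹ * A).det := isUnit_iff_ne_zero.mpr hC.det_pos.ne'
  have hMu : IsUnit M.det := isUnit_iff_ne_zero.mpr hM.det_pos.ne'
  have h1 : M⁻¹ * A * (Aᵀ * M⁻¹ * A)⁻¹ * Aᵀ * M⁻¹ * M = M⁻¹ * A * (Aᵀ * M⁻¹ * A)⁻¹ * Aᵀ := by
    rw [Matrix.mul_assoc _ M⁻¹ M, Matrix.nonsing_inv_mul _ hMu, Matrix.mul_one]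
  rw [h1]
  have h2 : (M⁻¹ * A * (Aᵀ * M⁻¹ * A)⁻¹ * Aᵀ).trace
      = ((Aᵀ * M⁻¹ * A) * (Aᵀ * M⁻¹ * A)⁻¹).trace := by
    rw [Matrix.trace_mul_comm]
    congr 1
    simp only [Matrix.mul_assoc]
  rw [h2, Matrix.mul_nonsing_inv _ hCu, Matrix.trace_one]

private lemma DAaux_contAt_mul {X : Type*} [TopologicalSpace X] {a b c : Type*}
    [Fintype a] [Fintype b] [Fintype c]
    {f : X → Matrix a b ℝ} {g : X → Matrix b c ℝ} {x : X}
    (hf : ContinuousAt f x) (hg : ContinuousAt g x) :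
    ContinuousAt (fun t => f t * g t) x :=
  ((continuous_fst.matrix_mul continuous_snd).continuousAt).comp (hf.prodMk hg)

private lemma DAaux_smul_posDef {M : Matrix n n ℝ} (hM : M.PosDef) {c : ℝ} (hc : 0 < c) :
    (c • M).PosDef := by
  refine Matrix.PosDef.of_dotProduct_mulVec_pos ?_ fun x hx => ?_
  · have h := hM.1
    rw [Matrix.IsHermitian, conjTranspose_eq_transpose_of_trivial] at h ⊢
    rw [Matrix.transpose_smul, h]
  · have := hM.dotProduct_mulVec_pos hx
    rw [smul_mulVec, dotProduct_smul, smul_eq_mul]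
    positivity

private lemma DAaux_smul_posSemidef {M : Matrix n n ℝ} (hM : M.PosSemidef) {c : ℝ}
    (hc : 0 ≤ c) : (c • M).PosSemidef := by
  refine Matrix.PosSemidef.of_dotProduct_mulVec_nonneg ?_ fun x => ?_
  · have h := hM.1
    rw [Matrix.IsHermitian, conjTranspose_eq_transpose_of_trivial] at h ⊢
    rw [Matrix.transpose_smul, h]
  · have := hM.dotProduct_mulVec_nonneg x
    rw [smul_mulVec, dotProduct_smul, smul_eq_mul]
    positivity

private lemma DAaux_rank_inj {p s : ℕ} {A : Matrix (Fin p) (Fin s) ℝ} (hA : A.rank = s) :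
    ∀ v : Fin s → ℝ, A *ᵥ v = 0 → v = 0 := by
  intro v hv
  have h1 : LinearMap.ker A.mulVecLin = ⊥ := by
    have h2 := A.mulVecLin.finrank_range_add_finrank_ker
    rw [show Module.finrank ℝ (Fin s → ℝ) = s by simp] at h2
    have h3 : Module.finrank ℝ (LinearMap.range A.mulVecLin) = s := hA
    have hk : Module.finrank ℝ (LinearMap.ker A.mulVecLin) = 0 := by omega
    exact Submodule.finrank_eq_zero.mp hk
  have : v ∈ LinearMap.ker A.mulVecLin := hv
  simpa [h1] using this

end Aux

/-- Kiefer–Wolfowitz type equivalence theorem for `D_A`-optimality,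
equivalence (1) ⇔ (2) of Theorem 1, over a finite design space. -/
theorem DA_optimality_equivalence
    {X : Type*} [Fintype X] [Nonempty X] (p s : ℕ) (hs : 0 < s) (hsp : s < p)
    (m : X → Matrix (Fin p) (Fin p) ℝ) (hm : ∀ x, (m x).PosSemidef)
    (A : Matrix (Fin p) (Fin s) ℝ) (hA : A.rank = s)
    (wstar : X → ℝ) (hw0 : ∀ x, 0 ≤ wstar x) (hw1 : ∑ x, wstar x = 1)
    (hM : (∑ x, wstar x • m x).PosDef) :
    (∀ w : X → ℝ, (∀ x, 0 ≤ w x) → ∑ x, w x = 1 → (∑ x, w x • m x).PosDef →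
        -Real.log (Aᵀ * (∑ x, w x • m x)⁻¹ * A).det ≤
          -Real.log (Aᵀ * (∑ x, wstar x • m x)⁻¹ * A).det) ↔
      (∀ x : X,
        ((∑ y, wstar y • m y)⁻¹ * A * (Aᵀ * (∑ y, wstar y • m y)⁻¹ * A)⁻¹ * Aᵀ *
            (∑ y, wstar y • m y)⁻¹ * m x).trace ≤ (s : ℝ)) := by
  classical
  have hAinj : ∀ v : Fin s → ℝ, A *ᵥ v = 0 → v = 0 := DAaux_rank_inj hA
  set M : Matrix (Fin p) (Fin p) ℝ := ∑ x, wstar x • m x with hMdef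
  have hcards : (Fintype.card (Fin s) : ℝ) = (s : ℝ) := by simp
  constructor
  · -- optimality → trace condition
    intro hopt x
    by_contra hcon
    push_neg at hcon
    -- notation
    set g : ℝ → ℝ := fun t =>
      ((M + t • (m x - M))⁻¹ * A *
        (Aᵀ * (M + t • (m x - M))⁻¹ * A)⁻¹ * Aᵀ * (M + t • (m x - M))⁻¹ * m x).trace with hgdef
    have hg0 : g 0 = (M⁻¹ * A * (Aᵀ * M⁻¹ * A)⁻¹ * Aᵀ * M⁻¹ * m x).trace := by
      simp [hgdef]
    have hNt : ∀ t : ℝ, 0 ≤ t → t < 1 → (M + t • (m x - M)).PosDef := by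
      intro t ht0 ht1
      have hrw : M + t • (m x - M) = (1 - t) • M + t • m x := by
        rw [smul_sub, sub_smul, one_smul]; abel
      rw [hrw]
      exact (DAaux_smul_posDef hM (by linarith)).add_posSemidef
        (DAaux_smul_posSemidef (hm x) ht0)
    -- continuity of g at 0
    have hgc : ContinuousAt g 0 := by
      have hNcont : Continuous fun t : ℝ => M + t • (m x - M) :=
        continuous_const.add (continuous_id.smul continuous_const)
      have hinv : ContinuousAt (fun t : ℝ => (M + t • (m x - M))⁻¹) 0 := by
        have heq : (fun t : ℝ => (M + t • (m x - M))⁻¹)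
            = fun t => ((M + t • (m x - M)).det)⁻¹ • (M + t • (m x - M)).adjugate := by
          funext t
          rw [Matrix.inv_def, Ring.inverse_eq_inv']
        rw [heq]
        have hdet : ContinuousAt (fun t : ℝ => (M + t • (m x - M)).det) 0 :=
          (hNcont.matrix_det).continuousAt
        have hdet0 : (M + (0:ℝ) • (m x - M)).det ≠ 0 := by
          simpa using hM.det_pos.ne'
        exact (hdet.inv₀ hdet0).smul (hNcont.matrix_adjugate).continuousAt
      have hCinv : ContinuousAt
          (fun t : ℝ => (Aᵀ * (M + t • (m x - M))⁻¹ * A)⁻¹) 0 := by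
        have hF : ContinuousAt (fun t : ℝ => Aᵀ * (M + t • (m x - M))⁻¹ * A) 0 :=
          DAaux_contAt_mul (DAaux_contAt_mul continuousAt_const hinv) continuousAt_const
        have heq : (fun t : ℝ => (Aᵀ * (M + t • (m x - M))⁻¹ * A)⁻¹)
            = fun t => ((Aᵀ * (M + t • (m x - M))⁻¹ * A).det)⁻¹
                • (Aᵀ * (M + t • (m x - M))⁻¹ * A).adjugate := by
          funext t
          rw [Matrix.inv_def, Ring.inverse_eq_inv']
        rw [heq]
        have hdetF : ContinuousAt
            (fun t : ℝ => (Aᵀ * (M + t • (m x - M))⁻¹ * A).det) 0 :=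
          (continuous_id.matrix_det).continuousAt.comp hF
        have hadjF : ContinuousAt
            (fun t : ℝ => (Aᵀ * (M + t • (m x - M))⁻¹ * A).adjugate) 0 :=
          (continuous_id.matrix_adjugate).continuousAt.comp hF
        have hdet0 : (Aᵀ * (M + (0:ℝ) • (m x - M))⁻¹ * A).det ≠ 0 := by
          have : (Aᵀ * M⁻¹ * A).PosDef := DAaux_posdef_conj hM.inv hAinj
          simpa using this.det_pos.ne'
        exact (hdetF.inv₀ hdet0).smul hadjF
      have : ContinuousAt (fun t : ℝ =>
          ((M + t • (m x - M))⁻¹ * A * (Aᵀ * (M + t • (m x - M))⁻¹ * A)⁻¹ * Aᵀ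
            * (M + t • (m x - M))⁻¹ * m x)) 0 :=
        DAaux_contAt_mul (DAaux_contAt_mul (DAaux_contAt_mul (DAaux_contAt_mul
          (DAaux_contAt_mul hinv continuousAt_const) hCinv) continuousAt_const) hinv)
          continuousAt_const
      exact (continuous_id.matrix_trace).continuousAt.comp this
    -- pick t ∈ (0,1) with s < g t
    have hg0' : (s : ℝ) < g 0 := by rw [hg0]; exact hcon
    have hmem : {t : ℝ | (s:ℝ) < g t} ∩ Set.Ioo (-1:ℝ) 1 ∈ nhds (0:ℝ) := by
      refine Filter.inter_mem ?_ (Ioo_mem_nhds (by norm_num) (by norm_num))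
      exact hgc (Ioi_mem_nhds hg0')
    have hev : ∀ᶠ t in nhdsWithin (0:ℝ) (Set.Ioi 0),
        t ∈ ({t | (s:ℝ) < g t} ∩ Set.Ioo (-1:ℝ) 1) ∩ Set.Ioi 0 :=
      Filter.eventually_mem_set.mpr
        (Filter.inter_mem (mem_nhdsWithin_of_mem_nhds hmem) self_mem_nhdsWithin)
    obtain ⟨t, ⟨hgt, htIoo⟩, ht0⟩ := hev.exists
    have ht0' : (0:ℝ) < t := ht0
    have ht1 : t < 1 := htIoo.2
    set N := M + t • (m x - M) with hNdef
    have hNpd : N.PosDef := hNt t ht0'.le ht1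
    -- the perturbed design
    set w : X → ℝ := fun y => (1 - t) * wstar y + t * (if y = x then 1 else 0) with hwdef
    have hw0' : ∀ y, 0 ≤ w y := by
      intro y
      have h := hw0 y
      have hry : w y = (1 - t) * wstar y + t * (if y = x then 1 else 0) := rfl
      rw [hry]
      split <;> nlinarith
    have hw1' : ∑ y, w y = 1 := by
      rw [hwdef]
      rw [Finset.sum_add_distrib, ← Finset.mul_sum, hw1, ← Finset.mul_sum]
      simp
    have hsum : ∑ y, w y • m y = N := by
      have : ∀ y, w y • m y = (1 - t) • (wstar y • m y)
          + (if y = x then t • m x else 0) := by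
        intro y
        have hry : w y = (1 - t) * wstar y + t * (if y = x then 1 else 0) := rfl
        rw [hry]
        by_cases h : y = x
        · subst h
          simp [add_smul, smul_smul]
        · simp [h, add_smul, smul_smul]
      rw [Finset.sum_congr rfl fun y _ => this y, Finset.sum_add_distrib,
        ← Finset.smul_sum, Finset.sum_ite_eq' Finset.univ x fun _ => t • m x]
      simp only [Finset.mem_univ, if_true, ← hMdef, hNdef]
      rw [smul_sub, sub_smul, one_smul]
      abel
    have hNw : (∑ y, w y • m y).PosDef := by rw [hsum]; exact hNpd
    have hoptN := hopt w hw0' hw1' hNw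
    rw [hsum] at hoptN
    -- master inequality with roles swapped
    have hmaster := DAaux_master hAinj hNpd hM
    rw [hcards] at hmaster
    -- so tr(B_N M) ≥ s
    have htrBNM : (s : ℝ) ≤ (N⁻¹ * A * (Aᵀ * N⁻¹ * A)⁻¹ * Aᵀ * N⁻¹ * M).trace := by
      linarith
    -- but tr(B_N N) = s
    have htrself := DAaux_trace_self hAinj hNpd
    rw [hcards] at htrself
    -- decompose tr(B_N N)
    set B := N⁻¹ * A * (Aᵀ * N⁻¹ * A)⁻¹ * Aᵀ * N⁻¹ with hBdef
    have hdecomp : (B * N).trace = (1 - t) * (B * M).trace + t * (B * m x).trace := by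
      have : B * N = (1 - t) • (B * M) + t • (B * m x) := by
        rw [hNdef, Matrix.mul_add, Matrix.mul_smul, Matrix.mul_sub, smul_sub, sub_smul, one_smul]
        abel
      rw [this, Matrix.trace_add, Matrix.trace_smul, Matrix.trace_smul, smul_eq_mul, smul_eq_mul]
    have hgt' : (s:ℝ) < (B * m x).trace := hgt
    have : (s:ℝ) < (B * N).trace := by
      rw [hdecomp]
      nlinarith
    rw [htrself] at this
    linarith
  · -- trace condition → optimality
    intro hcond w hw0' hw1' hMw
    have hmaster := DAaux_master hAinj hM hMw
    rw [hcards] at hmaster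
    set B := M⁻¹ * A * (Aᵀ * M⁻¹ * A)⁻¹ * Aᵀ * M⁻¹ with hBdef
    have htr : (B * ∑ y, w y • m y).trace = ∑ y, w y * (B * m y).trace := by
      rw [Matrix.mul_sum, Matrix.trace_sum]
      congr 1
      funext y
      rw [Matrix.mul_smul, Matrix.trace_smul, smul_eq_mul]
    have hle : (B * ∑ y, w y • m y).trace ≤ (s : ℝ) := by
      rw [htr]
      calc ∑ y, w y * (B * m y).trace ≤ ∑ y, w y * (s:ℝ) :=
            Finset.sum_le_sum fun y _ => mul_le_mul_of_nonneg_left (hcond y) (hw0' y)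
        _ = (s:ℝ) := by rw [← Finset.sum_mul, hw1', one_mul]
    linarith
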